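/- Lemma 3.1 (convergence of carriers to the vacuum carriers): fix n ≥ 3, l ≥ 1 and one of the three admissible κ. (i) There exists N₀ such that for every N ≥ N₀, every sequence b_1, …, b_N ∈ B with b_j = vac for all j with N − N₀ ≤ j ≤ N, and every x ∈ B_l, the right-moving carrier through b_1, b_2, …, b_N starting from x (at each site b_j = s_j ⊗ t_j, update the carrier c by (·, c') = ōR(c, s_j) followed by (·, c_new) = ōR∨(c', t_j)) ends at u_l. (ii) There exists N₀ such that for every N ≥ N₀, every sequence c_N, …, c_1 ∈ B with c_j = vac for all j with N − N₀ ≤ j ≤ N, and every y ∈ B∨_l, the left-moving carrier through c_1, c_2, …, c_N starting from y (at each site c_j = s_j ⊗ t_j, update the carrier w by (w', ·) = ōR∨∨(t_j, w) followed by (w_new, ·) = ōR∨(s_j, w')) ends at u∨_l = κ(u_l). -/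

import Mathlib

/- Common setup: crystals `B_l`, `B∨_l` for `U_q(sl_n^)`, combinatorial `R`, `R∨`, `R∨∨`
and the combinatorial `K` maps, following Kuniba–Okado–Yamada,
"Box-Ball System with Reflecting End".  Elements of `B_l` (and of `B∨_l`) are encoded as
integer-valued vectors indexed by `ZMod n` (coordinates read modulo `n`), membership in
`B_l` being expressed by the predicate `memB l`.  The affinization `Aff(B_l)` is encoded
as `ℤ × (ZMod n → ℤ)`, the pair `(d, x)` standing for `z^d x`. -/

namespace BBS

abbrev V (n : ℕ) := ZMod n → ℤ

variable {n : ℕ}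

/-- The candidate (for `k+1`, `0 ≤ k ≤ n-1`) in the minimum defining `Q_i(x,y)`:
`Σ_{j=1}^{k} x_{i+j} + Σ_{j=k+2}^{n} y_{i+j}`. -/
def Qt (x y : V n) (i : ZMod n) (k : ℕ) : ℤ :=
  (∑ j ∈ Finset.range k, x (i + (j : ZMod n) + 1)) +
    ∑ j ∈ Finset.Ico (k + 1) n, y (i + (j : ZMod n) + 1)

/-- `Qe x y i = Q_i(x,y) = min_{1 ≤ k ≤ n} ( Σ_{j=1}^{k−1} x_{i+j} + Σ_{j=k+1}^{n} y_{i+j} )`. -/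
def Qe (x y : V n) (i : ZMod n) : ℤ :=
  Finset.fold min (Qt x y i 0) (Qt x y i) (Finset.Ico 1 n)

/-- `Pe x y i = P_i(x,y) = min(x_{i+1}, y_{i+1})`. -/
def Pe (x y : V n) (i : ZMod n) : ℤ := min (x (i + 1)) (y (i + 1))

/-- Classical combinatorial `R : B_l ⊗ B_m → B_m ⊗ B_l`, `(x,y) ↦ (ỹ,x̃)`. -/
def Rbar (x y : V n) : V n × V n :=
  (fun i => y i + Qe x y (i - 1) - Qe x y i, fun i => x i + Qe x y i - Qe x y (i - 1))

/-- Classical combinatorial `R∨ : B_l ⊗ B∨_m → B∨_m ⊗ B_l`, `(x,y) ↦ (ỹ,x̃)`. -/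
def Rvbar (x y : V n) : V n × V n :=
  (fun i => y i + Pe x y i - Pe x y (i - 1), fun i => x i + Pe x y i - Pe x y (i - 1))

/-- Classical combinatorial `R∨∨ : B∨_l ⊗ B∨_m → B∨_m ⊗ B∨_l`, `(x,y) ↦ (ỹ,x̃)`. -/
def Rvvbar (x y : V n) : V n × V n :=
  (fun i => y i + Qe y x i - Qe y x (i - 1), fun i => x i + Qe y x (i - 1) - Qe y x i)

/-- The affinization: `(d, x)` stands for `z^d x`. -/
abbrev Aff (n : ℕ) := ℤ × V n

/-- Affine combinatorial `R`: `z^d x ⊗ z^e y ↦ z^{e−Q₀(x,y)} ỹ ⊗ z^{d+Q₀(x,y)} x̃`. -/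
def Raff (p : Aff n × Aff n) : Aff n × Aff n :=
  ((p.2.1 - Qe p.1.2 p.2.2 0, (Rbar p.1.2 p.2.2).1),
    (p.1.1 + Qe p.1.2 p.2.2 0, (Rbar p.1.2 p.2.2).2))

/-- Affine combinatorial `R∨`: `z^d x ⊗ z^e y ↦ z^{e−P₀(x,y)} ỹ ⊗ z^{d+P₀(x,y)} x̃`. -/
def Rvee (p : Aff n × Aff n) : Aff n × Aff n :=
  ((p.2.1 - Pe p.1.2 p.2.2 0, (Rvbar p.1.2 p.2.2).1),
    (p.1.1 + Pe p.1.2 p.2.2 0, (Rvbar p.1.2 p.2.2).2))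

/-- Affine combinatorial `R∨∨`: `z^d x ⊗ z^e y ↦ z^{e−Q₀(y,x)} ỹ ⊗ z^{d+Q₀(y,x)} x̃`. -/
def Rvv (p : Aff n × Aff n) : Aff n × Aff n :=
  ((p.2.1 - Qe p.2.2 p.1.2 0, (Rvvbar p.1.2 p.2.2).1),
    (p.1.1 + Qe p.2.2 p.1.2 0, (Rvvbar p.1.2 p.2.2).2))

/-- `κ =` Rotateleft: `κ(x) = (x_2, …, x_n, x_1)`. -/
def rotL (x : V n) : V n := fun i => x (i + 1)

/-- `I` for Rotateleft: `I(x) = −x_1`. -/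
def Irot (x : V n) : ℤ := -x 1

/-- `κ =` Switch₁ₙ (`n` even): exchanges the coordinate pairs
`(x_1,x_n), (x_2,x_3), (x_4,x_5), …, (x_{n−2},x_{n−1})`. -/
def sw1n (x : V n) : V n := fun i => if i.val % 2 = 1 then x (i - 1) else x (i + 1)

/-- `I` for Switch₁ₙ: `I(x) = x_n − x_1`. -/
def I1n (x : V n) : ℤ := x 0 - x 1

/-- `κ =` Switch₁₂ (`n` even): exchanges the coordinate pairs
`(x_1,x_2), (x_3,x_4), …, (x_{n−1},x_n)`. -/
def sw12 (x : V n) : V n := fun i => if i.val % 2 = 1 then x (i + 1) else x (i - 1)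

/-- `I` for Switch₁₂: `I(x) = 0`. -/
def I12 (_ : V n) : ℤ := 0

/-- Combinatorial `K : Aff(B_l) → Aff(B∨_l)`, `z^d x ↦ z^{−d+I(x)} κ(x)`. -/
def Kmap (κ : V n → V n) (I : V n → ℤ) (q : Aff n) : Aff n := (-q.1 + I q.2, κ q.2)

/-- Combinatorial `K∨ : Aff(B∨_l) → Aff(B_l)`, `z^d x ↦ z^{−d−I(x)} κ(x)`. -/
def Kvmap (κ : V n → V n) (I : V n → ℤ) (q : Aff n) : Aff n := (-q.1 - I q.2, κ q.2)

/-- `K₂`: apply `K` to the second tensor factor. -/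
def K2 (κ : V n → V n) (I : V n → ℤ) (p : Aff n × Aff n) : Aff n × Aff n :=
  (p.1, Kmap κ I p.2)

/-- `K∨₁`: apply `K∨` to the first tensor factor. -/
def Kv1 (κ : V n → V n) (I : V n → ℤ) (p : Aff n × Aff n) : Aff n × Aff n :=
  (Kvmap κ I p.1, p.2)

/-- `x ∈ B_l` (equivalently `x ∈ B∨_l`): all coordinates nonnegative, summing to `l`. -/
def memB (l : ℕ) (x : V n) : Prop :=
  (∀ i, 0 ≤ x i) ∧ (∑ j ∈ Finset.range n, x (j : ZMod n)) = (l : ℤ)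

end BBS

namespace BBS

/-- The letter `s ∈ {1, …, n}` of `B_1` (resp. `s̄` of `B∨_1`) as a unit vector. -/
def eLet (s : ℕ) : V n := fun a => if a = (s : ZMod n) then 1 else 0

/-- The highest element `u_l = (l, 0, …, 0) ∈ B_l`. -/
def uVec (l : ℕ) : V n := fun i => if i = 1 then (l : ℤ) else 0

/-- The vacuum local state `vac = 1 ⊗ κ(1) ∈ B = B_1 ⊗ B∨_1`. -/
def vacOf (κ : V n → V n) : V n × V n := (eLet 1, κ (eLet 1))

/-- Right-moving carrier update at a site `b = s ⊗ t`:
`(·, c') = ōR(c, s)` followed by `(·, c_new) = ōR∨(c', t)`. -/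
def stepR (c : V n) (b : V n × V n) : V n := (Rvbar (Rbar c b.1).2 b.2).2

/-- `runR b x N`: the right-moving carrier after passing through `b_1, b_2, …, b_N`,
starting from `x`. -/
def runR (b : ℕ → V n × V n) (x : V n) : ℕ → V n
  | 0 => x
  | N + 1 => stepR (runR b x N) (b (N + 1))

/-- Left-moving carrier update at a site `b = s ⊗ t`:
`(w', ·) = ōR∨∨(t, w)` followed by `(w_new, ·) = ōR∨(s, w')`. -/
def stepL (w : V n) (b : V n × V n) : V n := (Rvbar b.1 (Rvvbar b.2 w).1).1

/-- `runL b y N`: the left-moving carrier after passing through `b_1, b_2, …, b_N`,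
starting from `y`. -/
def runL (b : ℕ → V n × V n) (y : V n) : ℕ → V n
  | 0 => y
  | N + 1 => stepL (runL b y N) (b (N + 1))

section Aux

variable {n : ℕ}

/-- unit vector indexed directly by `ZMod n`. -/
def eZ (s : ZMod n) : V n := fun a => if a = s then 1 else 0

lemma eZ_nonneg (s a : ZMod n) : 0 ≤ eZ s a := by unfold eZ; split <;> simp

lemma eZ_apply_ne {s a : ZMod n} (h : a ≠ s) : eZ s a = 0 := if_neg h

lemma eZ_apply_self (s : ZMod n) : eZ s s = 1 := if_pos rfl

lemma sum_range_univ [NeZero n] (f : ZMod n → ℤ) :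
    ∑ j ∈ Finset.range n, f (j : ZMod n) = ∑ a : ZMod n, f a := by
  refine Finset.sum_nbij' (fun j => (j : ZMod n)) (fun a => a.val) ?_ ?_ ?_ ?_ ?_
  · intro a _; exact Finset.mem_univ _
  · intro a _; exact Finset.mem_range.2 (ZMod.val_lt a)
  · intro a ha; exact ZMod.val_cast_of_lt (Finset.mem_range.1 ha)
  · intro a _; exact ZMod.natCast_rightInverse a
  · intro a _; rfl

lemma sum_shift [NeZero n] (f : ZMod n → ℤ) (c : ZMod n) :
    ∑ j ∈ Finset.range n, f (c + (j : ZMod n)) = ∑ j ∈ Finset.range n, f (j : ZMod n) := by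
  rw [sum_range_univ (fun j => f (c + j)), sum_range_univ f]
  exact Fintype.sum_equiv (Equiv.addLeft c) _ _ (fun a => rfl)

/-- telescoping over a full period -/
lemma sum_tel [NeZero n] (F : ZMod n → ℤ) :
    ∑ j ∈ Finset.range n, (F ((j : ZMod n) - 1) - F (j : ZMod n)) = 0 := by
  rw [sum_range_univ (fun j => F (j - 1) - F j), Finset.sum_sub_distrib]
  rw [Fintype.sum_equiv (Equiv.subRight (1 : ZMod n)) (fun a => F (a - 1)) F (fun a => rfl)]
  exact sub_self _

end Aux
section QtLemmas

variable {n : ℕ} {x y : V n} {l m : ℕ}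

lemma cast_pred_self (hn : 0 < n) : (((n - 1 : ℕ)) : ZMod n) = -1 := by
  have : ((n : ℕ) : ZMod n) = 0 := ZMod.natCast_self n
  have h1 : (1 : ℕ) ≤ n := hn
  push_cast [Nat.cast_sub h1]
  rw [this]; ring

/-- window sum: summing `f` over `n-1` consecutive positions starting at `c`. -/
lemma sum_window [NeZero n] (f : ZMod n → ℤ) (L : ℤ)
    (hf : ∑ j ∈ Finset.range n, f (j : ZMod n) = L) (c : ZMod n) :
    ∑ j ∈ Finset.range (n - 1), f (c + (j : ZMod n)) = L - f (c - 1) := by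
  have hn : 0 < n := Nat.pos_of_ne_zero (NeZero.ne n)
  have h := sum_shift f c
  rw [hf] at h
  rw [show Finset.range n = Finset.range ((n - 1) + 1) from by congr 1; omega,
    Finset.sum_range_succ] at h
  have harg : c + (((n - 1 : ℕ)) : ZMod n) = c - 1 := by
    rw [cast_pred_self hn]; ring
  rw [harg] at h
  omega

lemma qt_zero [NeZero n] (hy : ∑ j ∈ Finset.range n, y (j : ZMod n) = (m : ℤ)) (i : ZMod n) :
    Qt x y i 0 = m - y (i + 1) := by
  have hn : 0 < n := Nat.pos_of_ne_zero (NeZero.ne n)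
  unfold Qt
  rw [Finset.sum_range_zero, zero_add, Finset.sum_Ico_eq_sum_range]
  have : ∀ j ∈ Finset.range (n - 1), y (i + ((1 + j : ℕ) : ZMod n) + 1)
      = y ((i + 2) + (j : ZMod n)) := by
    intro j _; congr 1; push_cast; ring
  rw [Finset.sum_congr rfl this, sum_window y m hy (i + 2)]
  congr 2; ring

lemma qt_last [NeZero n] (hx : ∑ j ∈ Finset.range n, x (j : ZMod n) = (l : ℤ)) (i : ZMod n) :
    Qt x y i (n - 1) = l - x i := by
  have hn : 0 < n := Nat.pos_of_ne_zero (NeZero.ne n)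
  unfold Qt
  have he : Finset.Ico (n - 1 + 1) n = ∅ := by
    rw [Finset.Ico_eq_empty_iff]; omega
  rw [he, Finset.sum_empty, add_zero]
  have : ∀ j ∈ Finset.range (n - 1), x (i + (j : ZMod n) + 1)
      = x ((i + 1) + (j : ZMod n)) := by
    intro j _; congr 1; ring
  rw [Finset.sum_congr rfl this, sum_window x l hx (i + 1)]
  congr 2; ring

lemma qt_rel (hkn : k + 2 ≤ n) (i : ZMod n) :
    Qt x y i k + x i = Qt x y (i - 1) (k + 1) + y i := by
  haveI : NeZero n := ⟨by omega⟩
  unfold Qt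
  rw [Finset.sum_range_succ']
  have e1 : ∀ j ∈ Finset.range k, x (i - 1 + ((j + 1 : ℕ) : ZMod n) + 1)
      = x (i + (j : ZMod n) + 1) := by intro j _; congr 1; push_cast; ring
  have e2 : x (i - 1 + ((0 : ℕ) : ZMod n) + 1) = x i := by congr 1; push_cast; ring
  rw [Finset.sum_congr rfl e1, e2]
  -- second sums
  have e3 : ∑ j ∈ Finset.Ico (k + 1) n, y (i + (j : ZMod n) + 1)
      = (∑ j ∈ Finset.Ico (k + 1 + 1) n, y (i - 1 + (j : ZMod n) + 1)) + y i := by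
    rw [Finset.sum_Ico_eq_sum_range, Finset.sum_Ico_eq_sum_range]
    have hr : n - (k + 1) = (n - (k + 2)) + 1 := by omega
    rw [hr, Finset.sum_range_succ]
    congr 1
    · apply Finset.sum_congr rfl
      intro j _; congr 1; push_cast; ring
    · have : (k + 1 + (n - (k + 2)) : ℕ) = n - 1 := by omega
      rw [this]; congr 1
      rw [cast_pred_self (by omega : 0 < n)]; ring
  rw [e3]; ring

lemma qt_nonneg (hx : ∀ a, 0 ≤ x a) (hy : ∀ a, 0 ≤ y a) (i : ZMod n) (k : ℕ) :
    0 ≤ Qt x y i k :=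
  add_nonneg (Finset.sum_nonneg fun _ _ => hx _) (Finset.sum_nonneg fun _ _ => hy _)

lemma qe_le_qt {k : ℕ} (hk : k < n) (i : ZMod n) : Qe x y i ≤ Qt x y i k := by
  unfold Qe
  rcases Nat.eq_zero_or_pos k with h | h
  · subst h; exact (Finset.fold_min_le _).2 (Or.inl le_rfl)
  · exact (Finset.fold_min_le _).2 (Or.inr ⟨k, Finset.mem_Ico.2 ⟨h, hk⟩, le_rfl⟩)

lemma le_qe {c : ℤ} (i : ZMod n) (h0 : c ≤ Qt x y i 0)
    (h : ∀ k, 1 ≤ k → k < n → c ≤ Qt x y i k) : c ≤ Qe x y i :=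
  (Finset.le_fold_min _).2 ⟨h0, fun k hk => h k (Finset.mem_Ico.1 hk).1 (Finset.mem_Ico.1 hk).2⟩

end QtLemmas
section Ineq

variable {n : ℕ} {x y : V n} {l m : ℕ}

lemma memB_sum' {x : V n} (h : memB l x) : ∑ j ∈ Finset.range n, x (j : ZMod n) = (l : ℤ) := h.2

lemma qe_ineq1 (hn : 3 ≤ n) (hx : memB l x) (hy : memB m y) (i : ZMod n) :
    Qe x y i ≤ y i + Qe x y (i - 1) := by
  haveI : NeZero n := ⟨by omega⟩
  rw [← sub_le_iff_le_add']
  refine le_qe (i - 1) ?_ ?_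
  · rw [qt_zero hy.2, sub_add_cancel]
    have h1 : Qe x y i ≤ Qt x y i 0 := qe_le_qt (by omega) i
    rw [qt_zero hy.2] at h1
    have := hy.1 (i + 1)
    omega
  · intro k hk1 hkn
    have hrel := qt_rel (x := x) (y := y) (k := k - 1) (by omega) i
    rw [show k - 1 + 1 = k from by omega] at hrel
    have h1 : Qe x y i ≤ Qt x y i (k - 1) := qe_le_qt (by omega) i
    have := hx.1 i
    omega

lemma qe_ineq2 (hn : 3 ≤ n) (hx : memB l x) (hy : memB m y) (i : ZMod n) :
    Qe x y (i - 1) ≤ x i + Qe x y i := by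
  haveI : NeZero n := ⟨by omega⟩
  rw [← sub_le_iff_le_add']
  refine le_qe i ?_ ?_
  · have h1 : Qe x y (i - 1) ≤ Qt x y (i - 1) (0 + 1) := qe_le_qt (by omega) _
    have hrel := qt_rel (x := x) (y := y) (k := 0) (by omega) i
    have := hy.1 i
    omega
  · intro k hk1 hkn
    rcases Nat.lt_or_ge k (n - 1) with h | h
    · have hrel := qt_rel (x := x) (y := y) (k := k) (by omega) i
      have h1 : Qe x y (i - 1) ≤ Qt x y (i - 1) (k + 1) := qe_le_qt (by omega) _
      have := hy.1 i
      omega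
    · have hk : k = n - 1 := by omega
      subst hk
      rw [qt_last hx.2]
      have h1 : Qe x y (i - 1) ≤ Qt x y (i - 1) (n - 1) := qe_le_qt (by omega) _
      rw [qt_last hx.2] at h1
      have := hx.1 (i - 1)
      omega

lemma qe_nonneg (hx : ∀ a, 0 ≤ x a) (hy : ∀ a, 0 ≤ y a) (i : ZMod n) : 0 ≤ Qe x y i :=
  le_qe i (qt_nonneg hx hy i 0) (fun k _ _ => qt_nonneg hx hy i k)

/-- coordinates are bounded by the total. -/
lemma memB_coord_le (hn : 0 < n) (hx : memB l x) (i : ZMod n) : x i ≤ (l : ℤ) := by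
  haveI : NeZero n := ⟨by omega⟩
  have h := hx.2
  rw [sum_range_univ] at h
  rw [← h]
  exact Finset.single_le_sum (fun a _ => hx.1 a) (Finset.mem_univ i)

/-- if one coordinate already carries the whole weight, the vector is concentrated there. -/
lemma memB_eq_single (hn : 0 < n) (hx : memB l x) (i₀ : ZMod n) (h : x i₀ = (l : ℤ)) :
    x = fun i => if i = i₀ then (l : ℤ) else 0 := by
  haveI : NeZero n := ⟨by omega⟩
  funext i
  by_cases hi : i = i₀
  · subst hi; rw [if_pos rfl, h]
  · rw [if_neg hi]
    have hs := hx.2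
    rw [sum_range_univ] at hs
    have h2 : x i₀ + x i ≤ ∑ a : ZMod n, x a := by
      rw [← Finset.sum_pair (Ne.symm hi)]
      exact Finset.sum_le_sum_of_subset_of_nonneg (Finset.subset_univ _)
        (fun a _ _ => hx.1 a)
    have := hx.1 i
    omega

end Ineq
section Preserve

variable {n : ℕ} {x y : V n} {l m : ℕ}

lemma sum_tel' [NeZero n] (F : ZMod n → ℤ) :
    ∑ j ∈ Finset.range n, (F (j : ZMod n) - F ((j : ZMod n) - 1)) = 0 := by
  have h := sum_tel F
  have : ∀ j ∈ Finset.range n, (F ((j : ZMod n)) - F ((j : ZMod n) - 1))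
      = -(F ((j : ZMod n) - 1) - F (j : ZMod n)) := by intro j _; ring
  rw [Finset.sum_congr rfl this, Finset.sum_neg_distrib, h, neg_zero]

lemma memB_add_tel [NeZero n] (hx : memB l x) (F : ZMod n → ℤ)
    (hpt : ∀ i, 0 ≤ x i + F i - F (i - 1)) :
    memB l (fun i => x i + F i - F (i - 1)) := by
  constructor
  · exact hpt
  · have : ∀ j ∈ Finset.range n, x (j : ZMod n) + F (j : ZMod n) - F ((j : ZMod n) - 1)
        = x (j : ZMod n) + (F (j : ZMod n) - F ((j : ZMod n) - 1)) := by intro j _; ring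
    rw [Finset.sum_congr rfl this, Finset.sum_add_distrib, sum_tel' F, add_zero, hx.2]

lemma memB_sub_tel [NeZero n] (hx : memB l x) (F : ZMod n → ℤ)
    (hpt : ∀ i, 0 ≤ x i + F (i - 1) - F i) :
    memB l (fun i => x i + F (i - 1) - F i) := by
  constructor
  · exact hpt
  · have : ∀ j ∈ Finset.range n, x (j : ZMod n) + F ((j : ZMod n) - 1) - F (j : ZMod n)
        = x (j : ZMod n) + (F ((j : ZMod n) - 1) - F (j : ZMod n)) := by intro j _; ring
    rw [Finset.sum_congr rfl this, Finset.sum_add_distrib, sum_tel F, add_zero, hx.2]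

lemma Rbar_mem_fst (hn : 3 ≤ n) (hx : memB l x) (hy : memB m y) : memB m (Rbar x y).1 := by
  haveI : NeZero n := ⟨by omega⟩
  exact memB_sub_tel hy (Qe x y) (fun i => by have := qe_ineq1 hn hx hy i; omega)

lemma Rbar_mem_snd (hn : 3 ≤ n) (hx : memB l x) (hy : memB m y) : memB l (Rbar x y).2 := by
  haveI : NeZero n := ⟨by omega⟩
  exact memB_add_tel hx (Qe x y) (fun i => by have := qe_ineq2 hn hx hy i; omega)

lemma Rvvbar_mem_fst (hn : 3 ≤ n) (hx : memB l x) (hy : memB m y) : memB m (Rvvbar x y).1 := by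
  haveI : NeZero n := ⟨by omega⟩
  exact memB_add_tel hy (Qe y x) (fun i => by have := qe_ineq2 hn hy hx i; omega)

lemma Rvvbar_mem_snd (hn : 3 ≤ n) (hx : memB l x) (hy : memB m y) : memB l (Rvvbar x y).2 := by
  haveI : NeZero n := ⟨by omega⟩
  exact memB_sub_tel hx (Qe y x) (fun i => by have := qe_ineq1 hn hy hx i; omega)

lemma Rvbar_mem_fst (hn : 3 ≤ n) (hx : memB l x) (hy : memB m y) : memB m (Rvbar x y).1 := by
  haveI : NeZero n := ⟨by omega⟩
  refine memB_add_tel hy (Pe x y) (fun i => ?_)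
  have h1 : Pe x y (i - 1) ≤ y i := by
    unfold Pe
    rw [sub_add_cancel]
    exact min_le_right _ _
  have h2 : 0 ≤ Pe x y i := le_min (hx.1 _) (hy.1 _)
  omega

lemma Rvbar_mem_snd (hn : 3 ≤ n) (hx : memB l x) (hy : memB m y) : memB l (Rvbar x y).2 := by
  haveI : NeZero n := ⟨by omega⟩
  refine memB_add_tel hx (Pe x y) (fun i => ?_)
  have h1 : Pe x y (i - 1) ≤ x i := by
    unfold Pe
    rw [sub_add_cancel]
    exact min_le_left _ _
  have h2 : 0 ≤ Pe x y i := le_min (hx.1 _) (hy.1 _)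
  omega

lemma stepR_mem (hn : 3 ≤ n) {c : V n} {b : V n × V n} (hc : memB l c)
    (hb1 : memB 1 b.1) (hb2 : memB 1 b.2) : memB l (stepR c b) :=
  Rvbar_mem_snd hn (Rbar_mem_snd hn hc hb1) hb2

lemma stepL_mem (hn : 3 ≤ n) {w : V n} {b : V n × V n} (hw : memB l w)
    (hb1 : memB 1 b.1) (hb2 : memB 1 b.2) : memB l (stepL w b) :=
  Rvbar_mem_fst hn hb1 (Rvvbar_mem_fst hn hb2 hw)

end Preserve
section VacEval

variable {n : ℕ} {x : V n} {l : ℕ}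

lemma zmod_cast_ne (hn : 0 < n) {a b : ℕ} (ha : a < n) (hb : b < n) (hab : a ≠ b) :
    ((a : ZMod n)) ≠ (b : ZMod n) := by
  intro h
  exact hab (by rw [← ZMod.val_cast_of_lt ha, ← ZMod.val_cast_of_lt hb, h])

lemma memB_eZ (hn : 0 < n) (s : ZMod n) : memB 1 (eZ s : V n) := by
  haveI : NeZero n := ⟨by omega⟩
  refine ⟨eZ_nonneg s, ?_⟩
  rw [sum_range_univ]
  unfold eZ
  rw [Finset.sum_ite_eq' Finset.univ s (fun _ => (1 : ℤ)), if_pos (Finset.mem_univ s)]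
  norm_num

lemma one_ne_zero_zmod (hn : 3 ≤ n) : (1 : ZMod n) ≠ 0 := by
  have := zmod_cast_ne (n := n) (by omega) (a := 1) (b := 0) (by omega) (by omega) (by omega)
  simpa using this

lemma qe_eZ_pred (hn : 3 ≤ n) (hx : ∀ a, 0 ≤ x a) (s : ZMod n) :
    Qe x (eZ s) (s - 1) = 0 := by
  refine le_antisymm ?_ (qe_nonneg hx (eZ_nonneg s) _)
  refine le_trans (qe_le_qt (k := 0) (by omega) _) (le_of_eq ?_)
  unfold Qt
  rw [Finset.sum_range_zero, zero_add]
  apply Finset.sum_eq_zero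
  intro j hj
  obtain ⟨hj1, hj2⟩ := Finset.mem_Ico.1 hj
  apply eZ_apply_ne
  have : s - 1 + (j : ZMod n) + 1 = s + (j : ZMod n) := by ring
  rw [this]
  intro h
  have hj0 : ((j : ℕ) : ZMod n) = 0 := add_eq_left.1 h
  have := zmod_cast_ne (n := n) (by omega) (a := j) (b := 0) hj2 (by omega) (by omega)
  simp only [Nat.cast_zero] at this
  exact this hj0

lemma qt_eZ_self_zero (hn : 3 ≤ n) (s : ZMod n) : Qt x (eZ s) s 0 = 1 := by
  haveI : NeZero n := ⟨by omega⟩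
  rw [qt_zero (memB_eZ (by omega) s).2]
  have : eZ s (s + 1) = 0 := by
    apply eZ_apply_ne
    intro h
    exact one_ne_zero_zmod hn (add_eq_left.1 h)
  rw [this]
  ring

lemma qe_eZ_self (hn : 3 ≤ n) (hx : memB l x) (s : ZMod n) :
    Qe x (eZ s) s = min 1 ((l : ℤ) - x s) := by
  haveI : NeZero n := ⟨by omega⟩
  refine le_antisymm (le_min ?_ ?_) ?_
  · refine le_trans (qe_le_qt (by omega) _) (le_of_eq (qt_eZ_self_zero hn s))
  · refine le_trans (qe_le_qt (k := n - 1) (by omega) _) (le_of_eq ?_)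
    exact qt_last hx.2 s
  · refine le_qe s ?_ ?_
    · rw [qt_eZ_self_zero hn s]; exact min_le_left _ _
    · intro k hk1 hkn
      rcases Nat.lt_or_ge k (n - 1) with h | h
      · -- indicator term at j = n-1 contributes 1
        refine le_trans (min_le_left _ _) ?_
        unfold Qt
        have h2 : (1 : ℤ) ≤ ∑ j ∈ Finset.Ico (k + 1) n, eZ s (s + (j : ZMod n) + 1) := by
          have hmem : n - 1 ∈ Finset.Ico (k + 1) n := Finset.mem_Ico.2 ⟨by omega, by omega⟩
          have hval : eZ s (s + ((n - 1 : ℕ) : ZMod n) + 1) = 1 := by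
            rw [cast_pred_self (by omega : 0 < n), show s + -1 + 1 = s from by ring]
            exact eZ_apply_self s
          calc (1 : ℤ) = eZ s (s + ((n - 1 : ℕ) : ZMod n) + 1) := hval.symm
            _ ≤ _ := Finset.single_le_sum (f := fun j : ℕ => eZ s (s + (j : ZMod n) + 1)) (fun j _ => eZ_nonneg _ _) hmem
        have h1 : (0 : ℤ) ≤ ∑ j ∈ Finset.range k, x (s + (j : ZMod n) + 1) :=
          Finset.sum_nonneg fun j _ => hx.1 _
        omega
      · have hk : k = n - 1 := by omega
        subst hk
        rw [qt_last hx.2]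
        exact min_le_right _ _

end VacEval
section Mono

variable {n : ℕ} {l : ℕ}

lemma stepR_mono (hn : 3 ≤ n) {c : V n} (hc : memB l c) {t₀ : ZMod n} (ht₀ : t₀ ≠ 1) :
    c 1 + min 1 ((l : ℤ) - c 1) ≤ stepR c (eZ 1, eZ t₀) 1 := by
  haveI : NeZero n := ⟨by omega⟩
  have hxt : memB l (Rbar c (eZ 1)).2 := Rbar_mem_snd hn hc (memB_eZ (by omega) 1)
  set xt := (Rbar c (eZ 1)).2 with hxtdef
  have hstep : stepR c (eZ 1, eZ t₀) 1
      = xt 1 + Pe xt (eZ t₀) 1 - Pe xt (eZ t₀) (1 - 1) := rfl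
  have hP0 : Pe xt (eZ t₀) (1 - 1) = 0 := by
    unfold Pe
    rw [sub_add_cancel, eZ_apply_ne (Ne.symm ht₀)]
    exact min_eq_right (hxt.1 1)
  have hP1 : 0 ≤ Pe xt (eZ t₀) 1 := le_min (hxt.1 _) (eZ_nonneg _ _)
  have hx1 : xt 1 = c 1 + Qe c (eZ 1) 1 - Qe c (eZ 1) (1 - 1) := rfl
  have hq1 : Qe c (eZ 1) 1 = min 1 ((l : ℤ) - c 1) := qe_eZ_self hn hc 1
  have hq0 : Qe c (eZ 1) (1 - 1) = 0 := qe_eZ_pred hn hc.1 1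
  rw [hstep, hP0, hx1, hq1, hq0]
  omega

lemma stepL_mono (hn : 3 ≤ n) {w : V n} (hw : memB l w) {t₀ : ZMod n} (ht₀ : t₀ ≠ 1) :
    w t₀ + min 1 ((l : ℤ) - w t₀) ≤ stepL w (eZ 1, eZ t₀) t₀ := by
  haveI : NeZero n := ⟨by omega⟩
  have hw2 : memB l (Rvvbar (eZ t₀) w).1 := Rvvbar_mem_fst hn (memB_eZ (by omega) t₀) hw
  set w2 := (Rvvbar (eZ t₀) w).1 with hw2def
  have hstep : stepL w (eZ 1, eZ t₀) t₀
      = w2 t₀ + Pe (eZ 1) w2 t₀ - Pe (eZ 1) w2 (t₀ - 1) := rfl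
  have hP0 : Pe (eZ 1) w2 (t₀ - 1) = 0 := by
    unfold Pe
    rw [sub_add_cancel, eZ_apply_ne ht₀]
    exact min_eq_left (hw2.1 t₀)
  have hP1 : 0 ≤ Pe (eZ 1) w2 t₀ := le_min (eZ_nonneg _ _) (hw2.1 _)
  have hwt : w2 t₀ = w t₀ + Qe w (eZ t₀) t₀ - Qe w (eZ t₀) (t₀ - 1) := rfl
  have hq1 : Qe w (eZ t₀) t₀ = min 1 ((l : ℤ) - w t₀) := qe_eZ_self hn hw t₀
  have hq0 : Qe w (eZ t₀) (t₀ - 1) = 0 := qe_eZ_pred hn hw.1 t₀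
  rw [hstep, hP0, hwt, hq1, hq0]
  omega

/-- generic run, common shape of `runR` and `runL`. -/
def runG (step : V n → V n × V n → V n) (b : ℕ → V n × V n) (x : V n) : ℕ → V n
  | 0 => x
  | N + 1 => step (runG step b x N) (b (N + 1))

lemma runR_eq_runG (b : ℕ → V n × V n) (x : V n) (N : ℕ) :
    runR b x N = runG stepR b x N := by
  induction N with
  | zero => rfl
  | succ N ih => rw [runR, runG, ih]

lemma runL_eq_runG (b : ℕ → V n × V n) (y : V n) (N : ℕ) :
    runL b y N = runG stepL b y N := by
  induction N with
  | zero => rfl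
  | succ N ih => rw [runL, runG, ih]

lemma runG_mem (hn : 3 ≤ n) (step : V n → V n × V n → V n)
    (hstep : ∀ c bb, memB l c → memB 1 bb.1 → memB 1 bb.2 → memB l (step c bb))
    (b : ℕ → V n × V n) (x : V n) (hx : memB l x) :
    ∀ M, (∀ j, 1 ≤ j → j ≤ M → memB 1 (b j).1 ∧ memB 1 (b j).2) →
      memB l (runG step b x M) := by
  intro M
  induction M with
  | zero => intro _; exact hx
  | succ M ih =>
      intro hb
      have hmem := ih (fun j hj1 hj2 => hb j hj1 (by omega))
      exact hstep _ _ hmem (hb (M + 1) (by omega) le_rfl).1 (hb (M + 1) (by omega) le_rfl).2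

lemma runG_main (hn : 3 ≤ n) (step : V n → V n × V n → V n)
    (hstep : ∀ c bb, memB l c → memB 1 bb.1 → memB 1 bb.2 → memB l (step c bb))
    (i₀ : ZMod n) (vacb : V n × V n)
    (hmono : ∀ c : V n, memB l c → c i₀ + min 1 ((l : ℤ) - c i₀) ≤ step c vacb i₀)
    (b : ℕ → V n × V n) (N : ℕ) (hN : l ≤ N)
    (hb : ∀ j, 1 ≤ j → j ≤ N → memB 1 (b j).1 ∧ memB 1 (b j).2)
    (hvacs : ∀ j, N - l ≤ j → j ≤ N → b j = vacb)
    (x : V n) (hx : memB l x) :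
    runG step b x N = fun i => if i = i₀ then (l : ℤ) else 0 := by
  have hA : ∀ M, M ≤ N → memB l (runG step b x M) := by
    intro M hM
    exact runG_mem hn step hstep b x hx M (fun j hj1 hj2 => hb j hj1 (by omega))
  have hB : ∀ k, k ≤ l →
      min ((runG step b x (N - l)) i₀ + (k : ℤ)) (l : ℤ) ≤ (runG step b x (N - l + k)) i₀ := by
    intro k
    induction k with
    | zero =>
        intro _
        have hc := memB_coord_le (by omega) (hA (N - l) (by omega)) i₀
        simp only [Nat.cast_zero, add_zero, Nat.add_zero]
        omega
    | succ k ih =>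
        intro hk
        have ihk := ih (by omega)
        have hmem : memB l (runG step b x (N - l + k)) := hA _ (by omega)
        have hvac : b (N - l + k + 1) = vacb := hvacs _ (by omega) (by omega)
        have hrec : runG step b x (N - l + (k + 1))
            = step (runG step b x (N - l + k)) (b (N - l + k + 1)) := rfl
        rw [hrec, hvac]
        have hm := hmono _ hmem
        have hle := memB_coord_le (by omega) hmem i₀
        push_cast
        push_cast at ihk
        omega
  have hfin := hB l le_rfl
  rw [show N - l + l = N from by omega] at hfin
  have h0 : 0 ≤ (runG step b x (N - l)) i₀ := (hA (N - l) (by omega)).1 i₀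
  have hNmem : memB l (runG step b x N) := hA N le_rfl
  have hcoord : (runG step b x N) i₀ = (l : ℤ) := by
    have := memB_coord_le (by omega) hNmem i₀
    omega
  exact memB_eq_single (by omega) hNmem i₀ hcoord

end Mono
section Kappa

variable {n : ℕ} {l : ℕ}

lemma two_val (hn : 3 ≤ n) : ((2 : ZMod n)).val = 2 := by
  have : ((2 : ℕ) : ZMod n) = (2 : ZMod n) := by push_cast; ring
  rw [← this, ZMod.val_cast_of_lt (by omega)]

lemma zero_ne_one_zmod (hn : 3 ≤ n) : (0 : ZMod n) ≠ 1 := by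
  have := zmod_cast_ne (n := n) (by omega) (a := 0) (b := 1) (by omega) (by omega) (by omega)
  simpa using this

lemma two_ne_one_zmod (hn : 3 ≤ n) : (2 : ZMod n) ≠ 1 := by
  have := zmod_cast_ne (n := n) (by omega) (a := 2) (b := 1) (by omega) (by omega) (by omega)
  push_cast at this; exact this

lemma eLet_one_eq : (eLet 1 : V n) = eZ 1 := by
  funext a; unfold eLet eZ; norm_num

lemma add_one_eq_one_iff {i : ZMod n} : i + 1 = 1 ↔ i = 0 := add_eq_right

lemma sub_eq_one_iff {i : ZMod n} : i - 1 = 1 ↔ i = 2 := by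
  constructor
  · intro h
    have := congrArg (· + 1) h
    simpa [sub_add_cancel, one_add_one_eq_two] using this
  · intro h; rw [h]; ring

lemma val_two_even (hn : 3 ≤ n) : ¬ ((2 : ZMod n)).val % 2 = 1 := by
  rw [two_val hn]; omega

lemma val_zero_even : ¬ ((0 : ZMod n)).val % 2 = 1 := by
  rw [ZMod.val_zero]; omega

lemma rotL_eLet : rotL (eLet 1 : V n) = eZ 0 := by
  funext i
  unfold rotL eLet eZ
  simp only [Nat.cast_one]
  split_ifs with h1 h2 h2
  · rfl
  · exact absurd (add_one_eq_one_iff.1 h1) h2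
  · exact absurd (by rw [h2, zero_add]) h1
  · rfl

lemma rotL_uVec : rotL (uVec l : V n) = fun i => if i = 0 then (l : ℤ) else 0 := by
  funext i
  unfold rotL uVec
  split_ifs with h1 h2 h2
  · rfl
  · exact absurd (add_one_eq_one_iff.1 h1) h2
  · exact absurd (by rw [h2, zero_add]) h1
  · rfl

lemma sw1n_gen (hn : 3 ≤ n) (v : ℤ) :
    (fun i : ZMod n => if i.val % 2 = 1 then (if i - 1 = 1 then v else 0)
        else (if i + 1 = 1 then v else 0))
      = fun i => if i = 0 then v else 0 := by
  funext i
  by_cases hpar : i.val % 2 = 1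
  · rw [if_pos hpar]
    split_ifs with h1 h2 h2
    · rfl
    · exfalso; rw [sub_eq_one_iff.1 h1] at hpar; exact val_two_even hn hpar
    · exfalso; rw [h2] at hpar; exact val_zero_even hpar
    · rfl
  · rw [if_neg hpar]
    split_ifs with h1 h2 h2
    · rfl
    · exact absurd (add_one_eq_one_iff.1 h1) h2
    · exact absurd (by rw [h2, zero_add]) h1
    · rfl

lemma sw12_gen (hn : 3 ≤ n) (v : ℤ) :
    (fun i : ZMod n => if i.val % 2 = 1 then (if i + 1 = 1 then v else 0)
        else (if i - 1 = 1 then v else 0))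
      = fun i => if i = 2 then v else 0 := by
  funext i
  by_cases hpar : i.val % 2 = 1
  · rw [if_pos hpar]
    split_ifs with h1 h2 h2
    · rfl
    · exfalso; rw [add_one_eq_one_iff.1 h1] at hpar; exact val_zero_even hpar
    · exfalso; rw [h2] at hpar; exact val_two_even hn hpar
    · rfl
  · rw [if_neg hpar]
    split_ifs with h1 h2 h2
    · rfl
    · exact absurd (sub_eq_one_iff.1 h1) h2
    · exact absurd (by rw [h2]; ring) h1
    · rfl

lemma sw1n_eLet (hn : 3 ≤ n) : sw1n (eLet 1 : V n) = eZ 0 := by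
  have := sw1n_gen hn (1 : ℤ)
  funext i
  have hi := congrFun this i
  unfold sw1n eLet eZ
  simp only [Nat.cast_one]
  simpa using hi

lemma sw1n_uVec (hn : 3 ≤ n) : sw1n (uVec l : V n) = fun i => if i = 0 then (l : ℤ) else 0 := by
  have := sw1n_gen hn ((l : ℤ))
  funext i
  have hi := congrFun this i
  unfold sw1n uVec
  simpa using hi

lemma sw12_eLet (hn : 3 ≤ n) : sw12 (eLet 1 : V n) = eZ 2 := by
  have := sw12_gen hn (1 : ℤ)
  funext i
  have hi := congrFun this i
  unfold sw12 eLet eZ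
  simp only [Nat.cast_one]
  simpa using hi

lemma sw12_uVec (hn : 3 ≤ n) : sw12 (uVec l : V n) = fun i => if i = 2 then (l : ℤ) else 0 := by
  have := sw12_gen hn ((l : ℤ))
  funext i
  have hi := congrFun this i
  unfold sw12 uVec
  simpa using hi

end Kappa
/-- Lemma 3.1, convergence of carriers to the vacuum carriers.
Fix `n ≥ 3`, `l ≥ 1` and one of the three admissible `κ`.
(i) There is `N₀` such that for every `N ≥ N₀`, every sequence `b_1, …, b_N ∈ B` with
`b_j = vac` for `N − N₀ ≤ j ≤ N`, and every `x ∈ B_l`, the right-moving carrier through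
`b_1, …, b_N` starting from `x` ends at `u_l`.
(ii) There is `N₀` such that for every `N ≥ N₀`, every sequence `c_N, …, c_1 ∈ B` with
`c_j = vac` for `N − N₀ ≤ j ≤ N`, and every `y ∈ B∨_l`, the left-moving carrier through
`c_1, c_2, …, c_N` starting from `y` ends at `u∨_l = κ(u_l)`. -/
theorem carriers_converge (n : ℕ) (hn : 3 ≤ n) (l : ℕ) (hl : 1 ≤ l)
    (κ : V n → V n)
    (hκ : κ = rotL ∨ (Even n ∧ κ = sw1n) ∨ (Even n ∧ κ = sw12)) :
    (∃ N₀ : ℕ, ∀ N, N₀ ≤ N →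
      ∀ b : ℕ → V n × V n,
        (∀ j, 1 ≤ j → j ≤ N → memB 1 (b j).1 ∧ memB 1 (b j).2) →
        (∀ j, N - N₀ ≤ j → j ≤ N → b j = vacOf κ) →
        ∀ x : V n, memB l x → runR b x N = uVec l) ∧
      ∃ N₀ : ℕ, ∀ N, N₀ ≤ N →
        ∀ b : ℕ → V n × V n,
          (∀ j, 1 ≤ j → j ≤ N → memB 1 (b j).1 ∧ memB 1 (b j).2) →
          (∀ j, N - N₀ ≤ j → j ≤ N → b j = vacOf κ) →
          ∀ y : V n, memB l y → runL b y N = κ (uVec l) := by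


  have key : ∃ t₀ : ZMod n, t₀ ≠ 1 ∧ vacOf κ = ((eZ 1 : V n), (eZ t₀ : V n)) ∧
      κ (uVec l) = fun i => if i = t₀ then (l : ℤ) else 0 := by
    rcases hκ with h | ⟨he, h⟩ | ⟨he, h⟩
    · exact ⟨0, zero_ne_one_zmod hn,
        by rw [vacOf, h, rotL_eLet, eLet_one_eq], by rw [h, rotL_uVec]⟩
    · exact ⟨0, zero_ne_one_zmod hn,
        by rw [vacOf, h, sw1n_eLet hn, eLet_one_eq], by rw [h, sw1n_uVec hn]⟩
    · exact ⟨2, two_ne_one_zmod hn,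
        by rw [vacOf, h, sw12_eLet hn, eLet_one_eq], by rw [h, sw12_uVec hn]⟩
  obtain ⟨t₀, ht₀ne, hvacid, huid⟩ := key
  constructor
  · refine ⟨l, fun N hN b hb hvac x hx => ?_⟩
    rw [runR_eq_runG]
    have hmain := runG_main (l := l) hn stepR
      (fun c bb hc h1 h2 => stepR_mem hn hc h1 h2)
      (1 : ZMod n) ((eZ 1 : V n), (eZ t₀ : V n))
      (fun c hc => stepR_mono hn hc ht₀ne)
      b N hN hb
      (fun j hj1 hj2 => by rw [hvac j hj1 hj2, hvacid])
      x hx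
    rw [hmain]
    rfl
  · refine ⟨l, fun N hN b hb hvac y hy => ?_⟩
    rw [runL_eq_runG]
    have hmain := runG_main (l := l) hn stepL
      (fun c bb hc h1 h2 => stepL_mem hn hc h1 h2)
      t₀ ((eZ 1 : V n), (eZ t₀ : V n))
      (fun c hc => stepL_mono hn hc ht₀ne)
      b N hN hb
      (fun j hj1 hj2 => by rw [hvac j hj1 hj2, hvacid])
      y hy
    rw [hmain, huid]

end BBS
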